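/- arXiv:1612.08531 — 3 statements merged into one kernel-verified Lean document; each statement's English description precedes it below -/
import Mathlib

section
/- Let G be a finite simple graph and let k be a positive integer with β(G) ≤ k < ν(G). Then G has a maximal matching M of size exactly k that has an augmenting P4, i.e., there exist vertices u, w, y, v with edges uw, wy, yv in G, wy ∈ M, and u and v not saturated by M. -/
open SimpleGraph

variable {V : Type*}

/-- `M` is a matching in `G`: a set of pairwise vertex-disjoint edges of `G`. -/
def IsMatchingIn (G : SimpleGraph V) (M : Finset (Sym2 V)) : Prop :=
  (∀ e ∈ M, e ∈ G.edgeSet) ∧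
    ∀ e ∈ M, ∀ f ∈ M, e ≠ f → ∀ v : V, v ∈ e → v ∉ f

/-- `M` is a maximal matching in `G`: a matching not properly contained in another matching. -/
def IsMaximalMatchingIn (G : SimpleGraph V) (M : Finset (Sym2 V)) : Prop :=
  IsMatchingIn G M ∧ ∀ M', IsMatchingIn G M' → M ⊆ M' → M' = M

/-- `M` saturates (covers) the vertex `v`. -/
def Sat (M : Finset (Sym2 V)) (v : V) : Prop := ∃ e ∈ M, v ∈ e

/-- The matching number `ν(G)`. -/
noncomputable def nuNum (G : SimpleGraph V) : ℕ :=
  sSup {n | ∃ M, IsMatchingIn G M ∧ M.card = n}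

/-- The minimum maximal matching number `β(G)`. -/
noncomputable def betaNum (G : SimpleGraph V) : ℕ :=
  sInf {n | ∃ M, IsMaximalMatchingIn G M ∧ M.card = n}

/-- The matching gap `μ(G) = ν(G) - β(G)`. -/
noncomputable def muGap (G : SimpleGraph V) : ℕ := nuNum G - betaNum G

/-- `M` has an augmenting `P₄`: a path `u w y v` on four distinct vertices with
`wy ∈ M` and `u`, `v` not saturated by `M`. -/
def HasAugP4 (G : SimpleGraph V) (M : Finset (Sym2 V)) : Prop :=
  ∃ u w y v : V, u ≠ w ∧ u ≠ y ∧ u ≠ v ∧ w ≠ y ∧ w ≠ v ∧ y ≠ v ∧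
    G.Adj u w ∧ G.Adj w y ∧ G.Adj y v ∧ s(w, y) ∈ M ∧ ¬ Sat M u ∧ ¬ Sat M v


/-- endpoints of a `Sym2` as a `Finset`. -/
noncomputable def s2f [DecidableEq V] (e : Sym2 V) : Finset V :=
  Sym2.lift ⟨fun a b => ({a, b} : Finset V), fun a b => Finset.pair_comm a b⟩ e

@[simp] lemma s2f_mk [DecidableEq V] (a b : V) : s2f s(a, b) = {a, b} := rfl

lemma mem_s2f [DecidableEq V] {v : V} {e : Sym2 V} : v ∈ s2f e ↔ v ∈ e := by
  induction e using Sym2.ind with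
  | _ a b => simp [s2f, Sym2.mem_iff]

lemma card_s2f [DecidableEq V] {e : Sym2 V} (h : ¬ e.IsDiag) : (s2f e).card = 2 := by
  induction e using Sym2.ind with
  | _ a b =>
    have : a ≠ b := by simpa using h
    simp [Finset.card_pair this]

lemma not_sat_iff {M : Finset (Sym2 V)} {v : V} : ¬ Sat M v ↔ ∀ e ∈ M, v ∉ e := by
  simp [Sat]

lemma sat_of_mem {M : Finset (Sym2 V)} {e : Sym2 V} {v : V} (he : e ∈ M) (hv : v ∈ e) :
    Sat M v := ⟨e, he, hv⟩

lemma ne_diag_of_matching {G : SimpleGraph V} {M : Finset (Sym2 V)}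
    (hM : IsMatchingIn G M) {a b : V} (h : s(a, b) ∈ M) : a ≠ b := by
  have := hM.1 _ h
  rw [SimpleGraph.mem_edgeSet] at this
  exact this.ne

/-- maximality characterization: every edge of `G` has a saturated endpoint. -/
lemma maxMatch_iff {G : SimpleGraph V} {M : Finset (Sym2 V)} :
    IsMaximalMatchingIn G M ↔
      IsMatchingIn G M ∧ ∀ a b : V, G.Adj a b → Sat M a ∨ Sat M b := by
  classical
  constructor
  · rintro ⟨hM, hmax⟩
    refine ⟨hM, fun a b hab => ?_⟩
    by_contra hcon
    push_neg at hcon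
    obtain ⟨ha, hb⟩ := hcon
    have hne : s(a, b) ∉ M := fun h => ha (sat_of_mem h (by simp))
    have hM' : IsMatchingIn G (insert s(a, b) M) := by
      constructor
      · intro e he
        rcases Finset.mem_insert.1 he with h | h
        · subst h; exact hab
        · exact hM.1 _ h
      · intro e he f hf hef v hve hvf
        rcases Finset.mem_insert.1 he with he' | he' <;>
          rcases Finset.mem_insert.1 hf with hf' | hf'
        · exact hef (he'.trans hf'.symm)
        · subst he'
          rcases Sym2.mem_iff.1 hve with rfl | rfl
          · exact ha (sat_of_mem hf' hvf)
          · exact hb (sat_of_mem hf' hvf)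
        · subst hf'
          rcases Sym2.mem_iff.1 hvf with rfl | rfl
          · exact ha (sat_of_mem he' hve)
          · exact hb (sat_of_mem he' hve)
        · exact hM.2 e he' f hf' hef v hve hvf
    have := hmax _ hM' (Finset.subset_insert _ _)
    exact hne (this ▸ Finset.mem_insert_self _ _)
  · rintro ⟨hM, hblock⟩
    refine ⟨hM, fun M' hM' hsub => ?_⟩
    apply Finset.Subset.antisymm _ hsub
    intro f hf
    by_contra hfM
    induction f using Sym2.ind with
    | _ a b =>
      have hadj : G.Adj a b := (SimpleGraph.mem_edgeSet G).1 (hM'.1 _ hf)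
      rcases hblock a b hadj with ⟨g, hg, hvg⟩ | ⟨g, hg, hvg⟩
      · exact hM'.2 g (hsub hg) _ hf (fun h => hfM (h ▸ hg)) a hvg (by simp)
      · exact hM'.2 g (hsub hg) _ hf (fun h => hfM (h ▸ hg)) b hvg (by simp)

lemma exists_unsat {G : SimpleGraph V} {M N : Finset (Sym2 V)}
    (hN : IsMatchingIn G N) (hcard : M.card < N.card) :
    ∃ u : V, Sat N u ∧ ¬ Sat M u := by
  classical
  by_contra hcon
  push_neg at hcon
  -- supports
  have hsubset : N.biUnion s2f ⊆ M.biUnion s2f := by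
    intro v hv
    rcases Finset.mem_biUnion.1 hv with ⟨e, he, hve⟩
    have : Sat M v := hcon v (sat_of_mem he (mem_s2f.1 hve))
    rcases this with ⟨f, hf, hvf⟩
    exact Finset.mem_biUnion.2 ⟨f, hf, mem_s2f.2 hvf⟩
  have hNcard : (N.biUnion s2f).card = 2 * N.card := by
    rw [Finset.card_biUnion, Finset.sum_congr rfl
      (fun e he => card_s2f (SimpleGraph.not_isDiag_of_mem_edgeSet G (hN.1 e he)))]
    · simp [Nat.mul_comm]
    · intro e he f hf hef
      simp only [Finset.disjoint_left]
      intro v hv hv'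
      exact hN.2 e he f hf hef v (mem_s2f.1 hv) (mem_s2f.1 hv')
  have hMcard : (M.biUnion s2f).card ≤ 2 * M.card := by
    calc (M.biUnion s2f).card ≤ ∑ e ∈ M, (s2f e).card := Finset.card_biUnion_le
    _ ≤ ∑ e ∈ M, 2 := Finset.sum_le_sum (fun e _ => by
        induction e using Sym2.ind with
        | _ a b => simpa using Finset.card_insert_le a {b})
    _ = 2 * M.card := by simp [Nat.mul_comm]
  have := Finset.card_le_card hsubset
  omega

lemma descent {G : SimpleGraph V} [DecidableEq (Sym2 V)] :
    ∀ n : ℕ, ∀ M N : Finset (Sym2 V), IsMaximalMatchingIn G M → IsMatchingIn G N →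
      M.card < N.card → (N \ M).card ≤ n →
      (∃ M₂, IsMaximalMatchingIn G M₂ ∧ M₂.card = M.card + 1) ∧
      (∃ M₃, IsMaximalMatchingIn G M₃ ∧ M₃.card = M.card ∧ HasAugP4 G M₃) := by
  intro n
  induction n with
  | zero =>
    intro M N hM hN hcard hd
    have hsub : N ⊆ M := by
      have h0 : (N \ M).card = 0 := Nat.le_zero.1 hd
      rw [Finset.card_eq_zero, Finset.sdiff_eq_empty_iff_subset] at h0
      exact h0
    exact absurd (Finset.card_le_card hsub) (by omega)
  | succ n ih =>
    intro M N hM hN hcard hd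
    classical
    obtain ⟨u, huN, huM⟩ := exists_unsat hN hcard
    obtain ⟨e, heN, hue⟩ := huN
    obtain ⟨x1, rfl⟩ := Sym2.mem_iff_exists.1 hue
    have hadj_ux1 : G.Adj u x1 := (SimpleGraph.mem_edgeSet G).1 (hN.1 _ heN)
    have hux1 : u ≠ x1 := hadj_ux1.ne
    have hx1 : Sat M x1 := by
      rcases (maxMatch_iff.1 hM).2 u x1 hadj_ux1 with h | h
      · exact absurd h huM
      · exact h
    obtain ⟨f, hfM, hx1f⟩ := hx1
    obtain ⟨x2, rfl⟩ := Sym2.mem_iff_exists.1 hx1f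
    have hx1x2 : x1 ≠ x2 := ne_diag_of_matching hM.1 hfM
    have hadj12 : G.Adj x1 x2 := (SimpleGraph.mem_edgeSet G).1 (hM.1.1 _ hfM)
    have hux2 : u ≠ x2 := fun h => huM (h ▸ sat_of_mem hfM (by simp))
    set M' := insert s(u, x1) (M.erase s(x1, x2)) with hM'def
    have huM_edge : s(u, x1) ∉ M := fun h => huM (sat_of_mem h (by simp))
    have hM'card : M'.card = M.card := by
      rw [hM'def, Finset.card_insert_of_notMem
          (fun h => huM_edge (Finset.mem_of_mem_erase h)),
        Finset.card_erase_of_mem hfM]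
      have : 0 < M.card := Finset.card_pos.2 ⟨_, hfM⟩
      omega
    have hsatM' : ∀ v, Sat M v → v ≠ x2 → Sat M' v := by
      rintro v ⟨g, hg, hvg⟩ hvx2
      by_cases hgf : g = s(x1, x2)
      · subst hgf
        rcases Sym2.mem_iff.1 hvg with rfl | rfl
        · exact sat_of_mem (Finset.mem_insert_self _ _) (by simp)
        · exact absurd rfl hvx2
      · exact sat_of_mem (Finset.mem_insert_of_mem (Finset.mem_erase.2 ⟨hgf, hg⟩)) hvg
    have hsatM'u : Sat M' u := sat_of_mem (Finset.mem_insert_self _ _) (by simp)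
    have key : ∀ g ∈ M.erase s(x1, x2), ∀ v, v ∈ s(u, x1) → v ∉ g := by
      intro g hg v hv
      obtain ⟨hgne, hgM⟩ := Finset.mem_erase.1 hg
      rcases Sym2.mem_iff.1 hv with rfl | rfl
      · exact fun h => huM (sat_of_mem hgM h)
      · exact hM.1.2 _ hfM _ hgM (Ne.symm hgne) v (by simp)
    have hM'match : IsMatchingIn G M' := by
      constructor
      · intro g hg
        rcases Finset.mem_insert.1 hg with rfl | hg
        · exact hadj_ux1
        · exact hM.1.1 _ (Finset.mem_of_mem_erase hg)
      · intro g hg f' hf' hne v hvg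
        rcases Finset.mem_insert.1 hg with rfl | hg <;>
          rcases Finset.mem_insert.1 hf' with rfl | hf'
        · exact absurd rfl hne
        · exact key _ hf' v hvg
        · exact fun hvf => key _ hg v hvf hvg
        · exact hM.1.2 _ (Finset.mem_of_mem_erase hg) _ (Finset.mem_of_mem_erase hf') hne v hvg
    by_cases hz : ∃ z, G.Adj x2 z ∧ ¬ Sat M z ∧ z ≠ u
    · obtain ⟨z, hadj2z, hzM, hzu⟩ := hz
      have hzx1 : z ≠ x1 := fun h => hzM (h ▸ sat_of_mem hfM (by simp))
      have hzx2 : z ≠ x2 := hadj2z.ne'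
      have hznotM' : s(z, x2) ∉ M' := by
        intro h
        rcases Finset.mem_insert.1 h with h | h
        · rcases (Sym2.eq_iff).1 h with ⟨h1, _⟩ | ⟨h1, _⟩
          · exact hzu h1
          · exact hzx1 h1
        · exact hzM (sat_of_mem (Finset.mem_of_mem_erase h) (by simp))
      constructor
      · refine ⟨insert s(z, x2) M', ?_, ?_⟩
        · rw [maxMatch_iff]
          constructor
          · constructor
            · intro g hg
              rcases Finset.mem_insert.1 hg with rfl | hg
              · exact hadj2z.symm
              · exact hM'match.1 _ hg
            · have key2 : ∀ g ∈ M', ∀ v, v ∈ s(z, x2) → v ∉ g := by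
                intro g hg v hv
                rcases Sym2.mem_iff.1 hv with rfl | rfl
                · -- v = z, unsaturated in M, z ∉ s(u,x1)
                  rcases Finset.mem_insert.1 hg with rfl | hg
                  · intro h
                    rcases Sym2.mem_iff.1 h with h1 | h1
                    · exact hzu h1
                    · exact hzx1 h1
                  · exact fun h => hzM (sat_of_mem (Finset.mem_of_mem_erase hg) h)
                · -- v = x2
                  rcases Finset.mem_insert.1 hg with rfl | hg
                  · intro h
                    rcases Sym2.mem_iff.1 h with h1 | h1
                    · exact hux2 h1.symm
                    · exact hx1x2 h1.symm
                  · obtain ⟨hgne, hgM⟩ := Finset.mem_erase.1 hg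
                    exact hM.1.2 _ hfM _ hgM (Ne.symm hgne) v (by simp)
              intro g hg f' hf' hne v hvg
              rcases Finset.mem_insert.1 hg with rfl | hg <;>
                rcases Finset.mem_insert.1 hf' with rfl | hf'
              · exact absurd rfl hne
              · exact key2 _ hf' v hvg
              · exact fun hvf => key2 _ hg v hvf hvg
              · exact hM'match.2 _ hg _ hf' hne v hvg
          · intro a b hab
            have hmono : ∀ v, Sat M v → Sat (insert s(z, x2) M') v := by
              intro v hv
              by_cases hvx2 : v = x2
              · exact ⟨s(z, x2), Finset.mem_insert_self _ _, by simp [hvx2]⟩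
              · obtain ⟨g, hg, hvg⟩ := hsatM' v hv hvx2
                exact ⟨g, Finset.mem_insert_of_mem hg, hvg⟩
            rcases (maxMatch_iff.1 hM).2 a b hab with h | h
            · exact Or.inl (hmono a h)
            · exact Or.inr (hmono b h)
        · rw [Finset.card_insert_of_notMem hznotM', hM'card]
      · refine ⟨M, hM, rfl, u, x1, x2, z, hux1, hux2, Ne.symm hzu, hx1x2,
          Ne.symm hzx1, Ne.symm hzx2, hadj_ux1, hadj12, hadj2z, hfM, huM, hzM⟩
    · -- M' is maximal; recurse
      have hM'max : IsMaximalMatchingIn G M' := by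
        rw [maxMatch_iff]
        refine ⟨hM'match, ?_⟩
        have main : ∀ a b, G.Adj a b → Sat M a → Sat M' a ∨ Sat M' b := by
          intro a b hab hSa
          by_cases hax2 : a = x2
          · subst hax2
            by_cases hSb : Sat M b
            · exact Or.inr (hsatM' b hSb hab.ne')
            · have hbu : b = u := by
                by_contra h
                exact hz ⟨b, hab, hSb, h⟩
              exact Or.inr (hbu ▸ hsatM'u)
          · exact Or.inl (hsatM' a hSa hax2)
        intro a b hab
        rcases (maxMatch_iff.1 hM).2 a b hab with h | h
        · exact main a b hab h
        · exact (main b a hab.symm h).symm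
      have hfN : s(x1, x2) ∉ N := by
        intro h
        have hne : s(x1, x2) ≠ s(u, x1) := by
          intro hh
          rcases (Sym2.eq_iff).1 hh with ⟨h1, _⟩ | ⟨_, h2⟩
          · exact hux1 h1.symm
          · exact hux2 h2.symm
        exact hN.2 _ h _ heN hne x1 (by simp) (by simp)
      have hmemsd : s(u, x1) ∈ N \ M := Finset.mem_sdiff.2 ⟨heN, huM_edge⟩
      have hNM' : N \ M' = (N \ M).erase s(u, x1) := by
        ext g
        simp only [Finset.mem_sdiff, Finset.mem_erase, hM'def, Finset.mem_insert]
        constructor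
        · rintro ⟨hgN, hg⟩
          push_neg at hg
          exact ⟨hg.1, hgN, fun hgM =>
            hg.2 (fun h => hfN (by rw [← h]; exact hgN)) hgM⟩
        · rintro ⟨hne, hgN, hgM⟩
          refine ⟨hgN, fun h => ?_⟩
          rcases h with h | ⟨_, h⟩
          · exact hne h
          · exact hgM h
      have hcard' : (N \ M').card ≤ n := by
        rw [hNM', Finset.card_erase_of_mem hmemsd]
        omega
      have hres := ih M' N hM'max hN (by rw [hM'card]; exact hcard) hcard'
      rw [hM'card] at hres
      exact hres

theorem stmt_2 {V : Type*} [Fintype V] (G : SimpleGraph V) (k : ℕ) (hk : 0 < k)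
    (hk₁ : betaNum G ≤ k) (hk₂ : k < nuNum G) :
    ∃ M : Finset (Sym2 V), IsMaximalMatchingIn G M ∧ M.card = k ∧ HasAugP4 G M := by
  classical
  set S : Set ℕ := {n | ∃ M, IsMatchingIn G M ∧ M.card = n} with hS
  have hSne : S.Nonempty := ⟨0, ∅, ⟨by simp, by simp⟩, rfl⟩
  have hSbdd : BddAbove S := by
    refine ⟨Fintype.card (Sym2 V), ?_⟩
    rintro n ⟨M, _, rfl⟩
    exact Finset.card_le_univ M
  have hν : nuNum G ∈ S := Nat.sSup_mem hSne hSbdd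
  obtain ⟨Nmax, hNmax, hNcard⟩ := hν
  have hNmaxMax : IsMaximalMatchingIn G Nmax := by
    refine ⟨hNmax, fun M' hM' hsub => ?_⟩
    have : M'.card ≤ nuNum G := le_csSup hSbdd ⟨M', hM', rfl⟩
    exact (Finset.eq_of_subset_of_card_le hsub (by omega)).symm
  have hβ : betaNum G ∈ {n | ∃ M, IsMaximalMatchingIn G M ∧ M.card = n} :=
    Nat.sInf_mem ⟨Nmax.card, Nmax, hNmaxMax, rfl⟩
  obtain ⟨B, hB, hBcard⟩ := hβ
  -- climb from betaNum to k
  have climb : ∀ j, betaNum G ≤ j → j ≤ k → ∃ M, IsMaximalMatchingIn G M ∧ M.card = j := by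
    intro j hj
    induction j, hj using Nat.le_induction with
    | base => exact fun _ => ⟨B, hB, hBcard⟩
    | succ j hj ihj =>
      intro hjk
      obtain ⟨M, hM, hMcard⟩ := ihj (by omega)
      have hlt : M.card < Nmax.card := by omega
      obtain ⟨⟨M₂, hM₂, hM₂card⟩, _⟩ :=
        descent (G := G) (Nmax \ M).card M Nmax hM hNmax hlt le_rfl
      exact ⟨M₂, hM₂, by omega⟩
  obtain ⟨Mk, hMk, hMkcard⟩ := climb k hk₁ le_rfl
  have hlt : Mk.card < Nmax.card := by omega
  obtain ⟨_, M₃, hM₃, hM₃card, hM₃aug⟩ :=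
    descent (G := G) (Nmax \ Mk).card Mk Nmax hMk hNmax hlt le_rfl
  exact ⟨M₃, hM₃, by omega, hM₃aug⟩
end

section
/- A finite simple graph G satisfies μ(G) = 1 (G is almost equimatchable) if and only if both of the following hold: (i) G contains a maximal matching with an augmenting P4, and (ii) every two maximal matchings of G with an augmenting P4 have the same size. -/
open SimpleGraph

variable {V : Type*}

section Helpers

variable {G : SimpleGraph V} {M N : Finset (Sym2 V)}

lemma mem_sym2_exists {e : Sym2 V} {x : V} (h : x ∈ e) : ∃ y, e = s(x, y) :=
  ⟨Sym2.Mem.other h, (Sym2.other_spec h).symm⟩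

lemma matching_subset (hM : IsMatchingIn G M) (h : N ⊆ M) : IsMatchingIn G N :=
  ⟨fun e he => hM.1 e (h he), fun e he f hf hne v hv => hM.2 e (h he) f (h hf) hne v hv⟩

lemma sat_mono (h : N ⊆ M) {x : V} (hx : Sat N x) : Sat M x := by
  obtain ⟨e, he, hxe⟩ := hx; exact ⟨e, h he, hxe⟩

lemma matching_insert [DecidableEq V] (hM : IsMatchingIn G M) {a b : V} (hab : G.Adj a b)
    (ha : ¬ Sat M a) (hb : ¬ Sat M b) : IsMatchingIn G (insert s(a, b) M) := by
  have hmem : ∀ x : V, x ∈ s(a, b) → ∀ f ∈ M, x ∉ f := by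
    intro x hx f hf hxf
    rw [Sym2.mem_iff] at hx
    rcases hx with rfl | rfl
    · exact ha ⟨f, hf, hxf⟩
    · exact hb ⟨f, hf, hxf⟩
  constructor
  · intro e he
    rcases Finset.mem_insert.mp he with rfl | he
    · exact hab
    · exact hM.1 e he
  · intro e he f hf hne v hv
    rcases Finset.mem_insert.mp he with rfl | he <;>
      rcases Finset.mem_insert.mp hf with rfl | hf
    · exact absurd rfl hne
    · exact hmem v hv f hf
    · intro hvf; exact hmem v hvf e he hv
    · exact hM.2 e he f hf hne v hv

lemma maximalMatchingIn_iff (hM : IsMatchingIn G M) :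
    -- maximality is equivalent to: every edge meets a saturated vertex
    IsMaximalMatchingIn G M ↔ ∀ a b : V, G.Adj a b → Sat M a ∨ Sat M b := by
  classical
  constructor
  · intro hmax a b hab
    by_contra hc
    push_neg at hc
    have hm' := matching_insert hM hab hc.1 hc.2
    have heq := hmax.2 _ hm' (Finset.subset_insert _ _)
    have : s(a, b) ∈ M := heq ▸ Finset.mem_insert_self _ _
    exact hc.1 ⟨_, this, by simp⟩
  · intro h
    refine ⟨hM, fun M' hM' hsub => ?_⟩
    refine Finset.Subset.antisymm ?_ hsub
    intro e he
    by_contra hne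
    obtain ⟨⟨a, b⟩, rfl⟩ := e.exists_rep
    have hadj : G.Adj a b := hM'.1 _ he
    rcases h a b hadj with ⟨f, hf, haf⟩ | ⟨f, hf, hbf⟩
    · exact hM'.2 _ he f (hsub hf) (fun hh => hne (hh ▸ hf)) a (by simp [Sym2.mem_iff]) haf
    · exact hM'.2 _ he f (hsub hf) (fun hh => hne (hh ▸ hf)) b (by simp [Sym2.mem_iff]) hbf

lemma exists_maximal_superset [Fintype V] (hM : IsMatchingIn G M) :
    ∃ M', IsMaximalMatchingIn G M' ∧ M ⊆ M' := by
  classical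
  set S : Finset (Finset (Sym2 V)) :=
    Finset.univ.filter (fun X => IsMatchingIn G X ∧ M ⊆ X) with hS
  have hMS : M ∈ S := by simp [hS, hM]
  obtain ⟨X, hXS, hXmax⟩ := S.exists_max_image Finset.card ⟨M, hMS⟩
  have hX : IsMatchingIn G X ∧ M ⊆ X := by simpa [hS] using hXS
  refine ⟨X, ⟨hX.1, ?_⟩, hX.2⟩
  intro M'' h'' hsub
  have hM''S : M'' ∈ S := by simp [hS, h'', hX.2.trans hsub]
  exact (Finset.eq_of_subset_of_card_le hsub (hXmax _ hM''S)).symm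

lemma exists_sat_not_sat [Fintype V] (hM : IsMatchingIn G M) (hN : IsMatchingIn G N)
    (h : M.card < N.card) : ∃ v, Sat N v ∧ ¬ Sat M v := by
  classical
  by_contra hc
  push_neg at hc
  set t : Sym2 V → Finset V := fun e => Finset.univ.filter (· ∈ e) with ht
  have hcard2 : ∀ (X : Finset (Sym2 V)), IsMatchingIn G X → ∀ e ∈ X, (t e).card = 2 := by
    intro X hX e he
    obtain ⟨⟨a, b⟩, rfl⟩ := e.exists_rep
    have hab : a ≠ b := (hX.1 _ he).ne
    have : t s(a, b) = {a, b} := by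
      ext x; simp [ht, Sym2.mem_iff]
    rw [this, Finset.card_insert_of_notMem (by simpa using hab), Finset.card_singleton]
  have hdisj : ∀ (X : Finset (Sym2 V)), IsMatchingIn G X →
      ∀ e ∈ X, ∀ f ∈ X, e ≠ f → Disjoint (t e) (t f) := by
    intro X hX e he f hf hne
    rw [Finset.disjoint_left]
    intro x hxe hxf
    simp only [ht, Finset.mem_filter] at hxe hxf
    exact hX.2 e he f hf hne x hxe.2 hxf.2
  have hcardb : ∀ (X : Finset (Sym2 V)), IsMatchingIn G X →
      (X.biUnion t).card = 2 * X.card := by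
    intro X hX
    rw [Finset.card_biUnion (hdisj X hX)]
    rw [Finset.sum_congr rfl (hcard2 X hX)]
    simp [mul_comm]
  have hsub : N.biUnion t ⊆ M.biUnion t := by
    intro x hx
    simp only [Finset.mem_biUnion, ht, Finset.mem_filter, Finset.mem_univ, true_and] at hx ⊢
    obtain ⟨e, he, hxe⟩ := hx
    exact hc x ⟨e, he, hxe⟩
  have := Finset.card_le_card hsub
  rw [hcardb N hN, hcardb M hM] at this
  omega

lemma augment (hM : IsMatchingIn G M) (h4 : HasAugP4 G M) :
    ∃ N, IsMatchingIn G N ∧ N.card = M.card + 1 ∧ ∀ x, Sat M x → Sat N x := by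
  classical
  obtain ⟨u, w, y, v, huw, huy, huv, hwy, hwv, hyv, auw, awy, ayv, hmem, hsu, hsv⟩ := h4
  set M1 : Finset (Sym2 V) := M.erase s(w, y) with hM1
  have hM1m : IsMatchingIn G M1 := matching_subset hM (Finset.erase_subset _ _)
  have hsatM1 : ∀ x, Sat M1 x → Sat M x := fun x => sat_mono (Finset.erase_subset _ _)
  have hy1 : ¬ Sat M1 y := by
    rintro ⟨f, hf, hyf⟩
    exact hM.2 f (Finset.mem_of_mem_erase hf) s(w, y) hmem (Finset.ne_of_mem_erase hf) y hyf
      (by simp [Sym2.mem_iff])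
  have hv1 : ¬ Sat M1 v := fun h => hsv (hsatM1 _ h)
  set M2 : Finset (Sym2 V) := insert s(y, v) M1 with hM2
  have hM2m : IsMatchingIn G M2 := matching_insert hM1m ayv hy1 hv1
  have hw1 : ¬ Sat M1 w := by
    rintro ⟨f, hf, hwf⟩
    exact hM.2 f (Finset.mem_of_mem_erase hf) s(w, y) hmem (Finset.ne_of_mem_erase hf) w hwf
      (by simp [Sym2.mem_iff])
  have hu2 : ¬ Sat M2 u := by
    rintro ⟨f, hf, huf⟩
    rcases Finset.mem_insert.mp hf with rfl | hf
    · rw [Sym2.mem_iff] at huf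
      rcases huf with rfl | rfl
      · exact huy rfl
      · exact huv rfl
    · exact hsu (hsatM1 _ ⟨f, hf, huf⟩)
  have hw2 : ¬ Sat M2 w := by
    rintro ⟨f, hf, hwf⟩
    rcases Finset.mem_insert.mp hf with rfl | hf
    · rw [Sym2.mem_iff] at hwf
      rcases hwf with rfl | rfl
      · exact hwy rfl
      · exact hwv rfl
    · exact hw1 ⟨f, hf, hwf⟩
  refine ⟨insert s(u, w) M2, matching_insert hM2m auw hu2 hw2, ?_, ?_⟩
  · have h1 : s(u, w) ∉ M2 := fun h => hu2 ⟨_, h, by simp [Sym2.mem_iff]⟩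
    have h2 : s(y, v) ∉ M1 := fun h => hy1 ⟨_, h, by simp [Sym2.mem_iff]⟩
    have h3 : 1 ≤ M.card := Finset.card_pos.mpr ⟨_, hmem⟩
    rw [Finset.card_insert_of_notMem h1, hM2, Finset.card_insert_of_notMem h2, hM1,
      Finset.card_erase_of_mem hmem]
    omega
  · rintro x ⟨f, hf, hxf⟩
    by_cases hfe : f = s(w, y)
    · subst hfe
      rw [Sym2.mem_iff] at hxf
      rcases hxf with rfl | rfl
      · exact ⟨s(u, x), Finset.mem_insert_self _ _, by simp [Sym2.mem_iff]⟩
      · exact ⟨s(x, v), Finset.mem_insert.mpr (Or.inr (Finset.mem_insert_self _ _)),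
          by simp [Sym2.mem_iff]⟩
    · exact ⟨f, Finset.mem_insert.mpr (Or.inr (Finset.mem_insert.mpr (Or.inr
        (Finset.mem_erase.mpr ⟨hfe, hf⟩)))), hxf⟩

lemma augment_maximal (hM : IsMaximalMatchingIn G M) (h4 : HasAugP4 G M) :
    ∃ N, IsMaximalMatchingIn G N ∧ N.card = M.card + 1 := by
  obtain ⟨N, hNm, hNc, hNs⟩ := augment hM.1 h4
  refine ⟨N, (maximalMatchingIn_iff hNm).mpr ?_, hNc⟩
  intro a b hab
  rcases (maximalMatchingIn_iff hM.1).mp hM a b hab with h | h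
  · exact Or.inl (hNs a h)
  · exact Or.inr (hNs b h)

lemma keyL [Fintype V] [DecidableEq V] (G : SimpleGraph V) :
    ∀ (n : ℕ) (M N : Finset (Sym2 V)), (N \ M).card ≤ n →
      IsMaximalMatchingIn G M → IsMatchingIn G N → M.card < N.card →
      ∃ M₀, IsMaximalMatchingIn G M₀ ∧ M₀.card = M.card ∧ HasAugP4 G M₀ := by
  classical
  intro n
  induction n with
  | zero =>
    intro M N hc hM hN hlt
    have : N \ M = ∅ := Finset.card_eq_zero.mp (Nat.le_zero.mp hc)
    have hsub : N ⊆ M := Finset.sdiff_eq_empty_iff_subset.mp this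
    have := Finset.card_le_card hsub
    omega
  | succ n ih =>
    intro M N hc hM hN hlt
    -- find a vertex saturated by N but not M
    obtain ⟨u0, hu0N, hu0M⟩ := exists_sat_not_sat hM.1 hN hlt
    obtain ⟨e1, he1N, hu0e1⟩ := hu0N
    obtain ⟨w, rfl⟩ := mem_sym2_exists hu0e1
    have adjuw : G.Adj u0 w := hN.1 _ he1N
    -- w must be saturated by M
    have hwM : Sat M w := by
      rcases (maximalMatchingIn_iff hM.1).mp hM u0 w adjuw with h | h
      · exact absurd h hu0M
      · exact h
    obtain ⟨e2, he2M, hwe2⟩ := hwM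
    obtain ⟨y, rfl⟩ := mem_sym2_exists hwe2
    have adjwy : G.Adj w y := hM.1.1 _ he2M
    have hyM : Sat M y := ⟨_, he2M, by simp [Sym2.mem_iff]⟩
    have hu0y : u0 ≠ y := fun h => hu0M (h ▸ hyM)
    have hu0w : u0 ≠ w := adjuw.ne
    -- the shifted matching M'
    set M1 : Finset (Sym2 V) := M.erase s(w, y) with hM1def
    have hM1m : IsMatchingIn G M1 := matching_subset hM.1 (Finset.erase_subset _ _)
    have hu01 : ¬ Sat M1 u0 := fun h => hu0M (sat_mono (Finset.erase_subset _ _) h)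
    have hw1 : ¬ Sat M1 w := by
      rintro ⟨f, hf, hwf⟩
      exact hM.1.2 f (Finset.mem_of_mem_erase hf) s(w, y) he2M (Finset.ne_of_mem_erase hf) w hwf
        (by simp [Sym2.mem_iff])
    set M' : Finset (Sym2 V) := insert s(u0, w) M1 with hM'def
    have hM'm : IsMatchingIn G M' := matching_insert hM1m adjuw hu01 hw1
    have hnotmem : s(u0, w) ∉ M1 := fun h => hu01 ⟨_, h, by simp [Sym2.mem_iff]⟩
    have hMpos : 1 ≤ M.card := Finset.card_pos.mpr ⟨_, he2M⟩
    have hM'card : M'.card = M.card := by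
      rw [hM'def, Finset.card_insert_of_notMem hnotmem, hM1def,
        Finset.card_erase_of_mem he2M]
      omega
    have hsatu0' : Sat M' u0 := ⟨s(u0, w), Finset.mem_insert_self _ _, by simp [Sym2.mem_iff]⟩
    have hsatw' : Sat M' w := ⟨s(u0, w), Finset.mem_insert_self _ _, by simp [Sym2.mem_iff]⟩
    -- fact: a vertex unsaturated by M' and different from y is unsaturated by M
    have hF : ∀ x : V, ¬ Sat M' x → x ≠ y → ¬ Sat M x := by
      rintro x hx hxy ⟨f, hf, hxf⟩
      by_cases hfe : f = s(w, y)
      · subst hfe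
        rw [Sym2.mem_iff] at hxf
        rcases hxf with rfl | rfl
        · exact hx hsatw'
        · exact hxy rfl
      · exact hx ⟨f, Finset.mem_insert.mpr (Or.inr (Finset.mem_erase.mpr ⟨hfe, hf⟩)), hxf⟩
    by_cases hmax' : IsMaximalMatchingIn G M'
    · -- recurse with smaller symmetric difference
      have he1notM : s(u0, w) ∉ M := fun h => hu0M ⟨_, h, by simp [Sym2.mem_iff]⟩
      have hmemdiff : s(u0, w) ∈ N \ M := Finset.mem_sdiff.mpr ⟨he1N, he1notM⟩
      have hsubdiff : N \ M' ⊆ (N \ M).erase s(u0, w) := by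
        intro f hf
        obtain ⟨hfN, hfM'⟩ := Finset.mem_sdiff.mp hf
        have hfne : f ≠ s(u0, w) := fun h => hfM' (h ▸ Finset.mem_insert_self _ _)
        refine Finset.mem_erase.mpr ⟨hfne, Finset.mem_sdiff.mpr ⟨hfN, ?_⟩⟩
        intro hfM
        by_cases hfe : f = s(w, y)
        · subst hfe
          -- s(w,y) ∈ N and s(u0,w) ∈ N share w, contradiction
          have hne : s(w, y) ≠ s(u0, w) := hfne
          exact (hN.2 _ hfN _ he1N hne w (by simp [Sym2.mem_iff]))
            (by simp [Sym2.mem_iff])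
        · exact hfM' (Finset.mem_insert.mpr (Or.inr (Finset.mem_erase.mpr ⟨hfe, hfM⟩)))
      have hcard' : (N \ M').card ≤ n := by
        have h1 := Finset.card_le_card hsubdiff
        rw [Finset.card_erase_of_mem hmemdiff] at h1
        have h2 : 1 ≤ (N \ M).card := Finset.card_pos.mpr ⟨_, hmemdiff⟩
        omega
      obtain ⟨M₀, hm₀, hc₀, h4₀⟩ := ih M' N hcard' hmax' hN (hM'card ▸ hlt)
      exact ⟨M₀, hm₀, hc₀.trans hM'card, h4₀⟩
    · -- M' not maximal: M itself has an augmenting P4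
      have : ¬ ∀ a b : V, G.Adj a b → Sat M' a ∨ Sat M' b := fun h =>
        hmax' ((maximalMatchingIn_iff hM'm).mpr h)
      push_neg at this
      obtain ⟨a, b, hab, ha, hb⟩ := this
      -- one of a, b must be y
      have hkey : ∀ z : V, G.Adj y z → ¬ Sat M' z → z ≠ y → HasAugP4 G M := by
        intro z adjyz hz hzy
        have hzM : ¬ Sat M z := hF z hz hzy
        refine ⟨u0, w, y, z, hu0w, hu0y, ?_, adjwy.ne, ?_, fun h => hzy h.symm,
          adjuw, adjwy, adjyz, he2M, hu0M, hzM⟩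
        · exact fun h => hz (h ▸ hsatu0')
        · intro h
          exact hzM (h ▸ ⟨s(w, y), he2M, by simp [Sym2.mem_iff]⟩)
      by_cases hay : a = y
      · subst hay
        exact ⟨M, hM, rfl, hkey b hab hb hab.ne'⟩
      · by_cases hby : b = y
        · subst hby
          exact ⟨M, hM, rfl, hkey a hab.symm ha hab.ne⟩
        · exfalso
          have haM : ¬ Sat M a := hF a ha hay
          have hbM : ¬ Sat M b := hF b hb hby
          rcases (maximalMatchingIn_iff hM.1).mp hM a b hab with h | h
          · exact haM h
          · exact hbM h

lemma empty_matching : IsMatchingIn G (∅ : Finset (Sym2 V)) :=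
  ⟨fun e he => absurd he (Finset.notMem_empty e),
   fun e he => absurd he (Finset.notMem_empty e)⟩

lemma nu_spec [Fintype V] (G : SimpleGraph V) :
    (∃ M, IsMatchingIn G M ∧ M.card = nuNum G) ∧
      ∀ M, IsMatchingIn G M → M.card ≤ nuNum G := by
  classical
  have hbdd : BddAbove {n | ∃ M, IsMatchingIn G M ∧ M.card = n} := by
    refine ⟨Fintype.card (Sym2 V), ?_⟩
    rintro n ⟨M, _, rfl⟩
    exact Finset.card_le_univ M
  have hne : {n | ∃ M, IsMatchingIn G M ∧ M.card = n}.Nonempty :=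
    ⟨0, ∅, empty_matching, Finset.card_empty⟩
  exact ⟨Nat.sSup_mem hne hbdd, fun M hM => le_csSup hbdd ⟨M, hM, rfl⟩⟩

lemma beta_spec [Fintype V] (G : SimpleGraph V) :
    (∃ M, IsMaximalMatchingIn G M ∧ M.card = betaNum G) ∧
      ∀ M, IsMaximalMatchingIn G M → betaNum G ≤ M.card := by
  have hne : {n | ∃ M, IsMaximalMatchingIn G M ∧ M.card = n}.Nonempty := by
    obtain ⟨M', hM', _⟩ := exists_maximal_superset (G := G) empty_matching
    exact ⟨M'.card, M', hM', rfl⟩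
  exact ⟨Nat.sInf_mem hne, fun M hM => Nat.sInf_le ⟨M, hM, rfl⟩⟩

end Helpers

theorem stmt_6 {V : Type*} [Fintype V] (G : SimpleGraph V) :
    muGap G = 1 ↔
      (∃ M : Finset (Sym2 V), IsMaximalMatchingIn G M ∧ HasAugP4 G M) ∧
      (∀ M M' : Finset (Sym2 V), IsMaximalMatchingIn G M → IsMaximalMatchingIn G M' →
        HasAugP4 G M → HasAugP4 G M' → M.card = M'.card) := by
  classical
  obtain ⟨⟨Nmax, hNmax, hNmaxc⟩, hnuub⟩ := nu_spec G
  obtain ⟨⟨Mbeta, hMbeta, hMbetac⟩, hbetalb⟩ := beta_spec G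
  constructor
  · intro hmu
    classical
    have hmu' : nuNum G - betaNum G = 1 := hmu
    have hbn : betaNum G ≤ nuNum G := by
      have := hnuub Mbeta hMbeta.1
      omega
    have hnb : nuNum G = betaNum G + 1 := by omega
    have hlt : Mbeta.card < Nmax.card := by omega
    obtain ⟨M₀, hm₀, hc₀, h4₀⟩ := keyL G (Nmax \ Mbeta).card Mbeta Nmax le_rfl hMbeta hNmax hlt
    refine ⟨⟨M₀, hm₀, h4₀⟩, ?_⟩
    have hbound : ∀ M : Finset (Sym2 V), IsMaximalMatchingIn G M → HasAugP4 G M →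
        M.card = betaNum G := by
      intro M hMm h4
      obtain ⟨N, hNm, hNc, _⟩ := augment hMm.1 h4
      have h1 : N.card ≤ nuNum G := hnuub N hNm
      have h2 : betaNum G ≤ M.card := hbetalb M hMm
      omega
    intro M M' hMm hM'm h4 h4'
    rw [hbound M hMm h4, hbound M' hM'm h4']
  · rintro ⟨⟨M₁, hM₁, h4₁⟩, hsame⟩
    obtain ⟨N₁, hN₁, hN₁c⟩ := augment_maximal hM₁ h4₁
    have hnu_ge : M₁.card + 1 ≤ nuNum G := hN₁c ▸ hnuub N₁ hN₁.1
    have hbeta_le : betaNum G ≤ M₁.card := hbetalb M₁ hM₁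
    have hnu_le : nuNum G ≤ M₁.card + 1 := by
      by_contra hcon
      push_neg at hcon
      have hlt : N₁.card < Nmax.card := by omega
      obtain ⟨M₀, hm₀, hc₀, h4₀⟩ := keyL G (Nmax \ N₁).card N₁ Nmax le_rfl hN₁ hNmax hlt
      have := hsame M₁ M₀ hM₁ hm₀ h4₁ h4₀
      omega
    have hbeta_ge : M₁.card ≤ betaNum G := by
      by_contra hcon
      push_neg at hcon
      have hlt : Mbeta.card < Nmax.card := by omega
      obtain ⟨M₀, hm₀, hc₀, h4₀⟩ := keyL G (Nmax \ Mbeta).card Mbeta Nmax le_rfl hMbeta hNmax hlt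
      have := hsame M₁ M₀ hM₁ hm₀ h4₁ h4₀
      omega
    show nuNum G - betaNum G = 1
    omega
end

section
/- For every finite simple graph G, the equimatchability defect η(G) equals the minimum size of a set S ⊆ V(G) such that S intersects Exp(M) for every second best matching M of G, where Exp(M) is the set of vertices exposed by M. -/
open SimpleGraph

set_option linter.unusedSectionVars false

variable {V : Type*}

/-- `M` covers the vertex set `S`. -/
def CoversSet (M : Finset (Sym2 V)) (S : Set V) : Prop := ∀ v ∈ S, Sat M v

/-- `S` is an equimatchable set in `G`: all maximal matchings of `G` covering `S`
have the same size. -/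
def EquiSet (G : SimpleGraph V) (S : Set V) : Prop :=
  ∀ M M' : Finset (Sym2 V), IsMaximalMatchingIn G M → IsMaximalMatchingIn G M' →
    CoversSet M S → CoversSet M' S → M.card = M'.card

/-- The equimatchability defect `η(G)`: the minimum size of an equimatchable set in `G`. -/
noncomputable def etaDefect (G : SimpleGraph V) : ℕ :=
  sInf {n | ∃ S : Set V, EquiSet G S ∧ S.ncard = n}

/-- A second best matching: a maximal matching of size `ν(G) - 1`. -/
def IsSecondBest (G : SimpleGraph V) (M : Finset (Sym2 V)) : Prop :=
  IsMaximalMatchingIn G M ∧ M.card + 1 = nuNum G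

/-- `Exp(M)`: the set of vertices exposed (not saturated) by `M`. -/
def ExpSet (M : Finset (Sym2 V)) : Set V := {v | ¬ Sat M v}

section Aux
variable [Fintype V] {G : SimpleGraph V}

lemma matchingIn_anti {M N : Finset (Sym2 V)} (h : IsMatchingIn G N) (hsub : M ⊆ N) :
    IsMatchingIn G M :=
  ⟨fun e he => h.1 e (hsub he), fun e he f hf => h.2 e (hsub he) f (hsub hf)⟩

lemma bddAbove_matching_sizes :
    BddAbove {n | ∃ M, IsMatchingIn G M ∧ M.card = n} := by
  classical
  exact ⟨Fintype.card (Sym2 V), fun n ⟨M, _, hM⟩ => hM ▸ M.card_le_univ⟩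

lemma card_le_nu {M : Finset (Sym2 V)} (hM : IsMatchingIn G M) : M.card ≤ nuNum G :=
  le_csSup bddAbove_matching_sizes ⟨M, hM, rfl⟩

lemma exists_nu_matching (G : SimpleGraph V) :
    ∃ X : Finset (Sym2 V), IsMatchingIn G X ∧ X.card = nuNum G := by
  have : nuNum G ∈ {n | ∃ M, IsMatchingIn G M ∧ M.card = n} :=
    Nat.sSup_mem ⟨0, ∅, ⟨⟨fun e he => absurd he (by simp), fun e he => absurd he (by simp)⟩, by simp⟩⟩ bddAbove_matching_sizes
  exact this

lemma berge {M X : Finset (Sym2 V)} (hM : IsMatchingIn G M) (hX : IsMatchingIn G X)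
    (h : M.card < X.card) :
    ∃ N, IsMatchingIn G N ∧ N.card = M.card + 1 ∧ ∀ v, Sat M v → Sat N v := by
  classical
  set P : Finset (Sym2 V) → Prop := fun N => IsMatchingIn G N ∧ N.card = M.card + 1 with hP
  have hPne : ∃ N, P N := by
    obtain ⟨N, hNX, hNcard⟩ := Finset.exists_subset_card_eq (s := X) (n := M.card + 1) h
    exact ⟨N, matchingIn_anti hX hNX, hNcard⟩
  set T : Set ℕ := {j | ∃ N, P N ∧ (N ∩ M).card = j} with hT
  have hTne : T.Nonempty := hPne.elim fun N hN => ⟨_, N, hN, rfl⟩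
  have hTbdd : BddAbove T := ⟨Fintype.card (Sym2 V), fun j ⟨N, _, hj⟩ => hj ▸ Finset.card_le_univ _⟩
  obtain ⟨N, hPN, hNk⟩ := Nat.sSup_mem hTne hTbdd
  have key : ∀ N', P N' → (N' ∩ M).card ≤ (N ∩ M).card := fun N' hN' =>
    hNk ▸ le_csSup hTbdd ⟨N', hN', rfl⟩
  refine ⟨N, hPN.1, hPN.2, ?_⟩
  intro u hu
  by_contra hNu
  obtain ⟨f, hfM, hufu⟩ := hu
  obtain ⟨w, rfl⟩ : ∃ w, f = s(u, w) := Sym2.mem_iff_exists.mp hufu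
  have hadj : G.Adj u w := (G.mem_edgeSet).mp (hM.1 _ hfM)
  have hfN : s(u, w) ∉ N := fun hc => hNu ⟨_, hc, Sym2.mem_mk_left u w⟩
  -- produce a better N' : erase some edge g and insert f
  have better : ∀ g ∈ N, g ∉ M →
      (∀ e ∈ N.erase g, ∀ v, v ∈ s(u, w) → v ∉ e) → False := by
    intro g hgN hgM hdisj
    set N' : Finset (Sym2 V) := insert (s(u, w)) (N.erase g) with hN'
    have hfNe : s(u, w) ∉ N.erase g := fun hc => hfN (Finset.mem_of_mem_erase hc)
    have hN'card : N'.card = M.card + 1 := by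
      rw [hN', Finset.card_insert_of_notMem hfNe, Finset.card_erase_of_mem hgN]
      have : 1 ≤ N.card := Finset.card_pos.mpr ⟨g, hgN⟩
      omega
    have hN'match : IsMatchingIn G N' := by
      constructor
      · intro e he
        rcases Finset.mem_insert.mp he with rfl | he'
        · exact hM.1 _ hfM
        · exact hPN.1.1 _ (Finset.mem_of_mem_erase he')
      · intro e he e' he' hne v hv
        rcases Finset.mem_insert.mp he with rfl | he2
        · rcases Finset.mem_insert.mp he' with rfl | he2'
          · exact absurd rfl hne
          · exact hdisj _ he2' v hv
        · rcases Finset.mem_insert.mp he' with rfl | he2'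
          · intro hvf
            exact hdisj _ he2 v hvf hv
          · exact hPN.1.2 _ (Finset.mem_of_mem_erase he2) _ (Finset.mem_of_mem_erase he2') hne v hv
    have hsub : N ∩ M ⊂ N' ∩ M := by
      constructor
      · intro e heNM
        have heN := Finset.mem_inter.mp heNM
        refine Finset.mem_inter.mpr ⟨?_, heN.2⟩
        have : e ≠ g := fun hc => hgM (hc ▸ heN.2)
        exact Finset.mem_insert_of_mem (Finset.mem_erase.mpr ⟨this, heN.1⟩)
      · intro hcon
        have : s(u, w) ∈ N ∩ M := hcon (Finset.mem_inter.mpr ⟨Finset.mem_insert_self _ _, hfM⟩)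
        exact hfN (Finset.mem_inter.mp this).1
    exact absurd (key N' ⟨hN'match, hN'card⟩) (not_le.mpr (Finset.card_lt_card hsub))
  by_cases hw : Sat N w
  · obtain ⟨g, hgN, hwg⟩ := hw
    have hgf : g ≠ s(u, w) := fun hc => hfN (hc ▸ hgN)
    have hgM : g ∉ M := by
      intro hgMmem
      exact hM.2 _ hfM g hgMmem (Ne.symm hgf) w (Sym2.mem_mk_right u w) hwg
    refine better g hgN hgM ?_
    intro e he v hv
    rcases Sym2.mem_iff.mp hv with rfl | rfl
    · intro hve
      exact hNu ⟨e, Finset.mem_of_mem_erase he, hve⟩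
    · exact hPN.1.2 g hgN e (Finset.mem_of_mem_erase he) (fun hc => (Finset.mem_erase.mp he).1 hc.symm) v hwg
  · -- w exposed too; pick any edge of N not in M
    have : ∃ g ∈ N, g ∉ M := by
      by_contra hcon
      push_neg at hcon
      have : N ⊆ M := hcon
      have := Finset.card_le_card this
      omega
    obtain ⟨g, hgN, hgM⟩ := this
    refine better g hgN hgM ?_
    intro e he v hv
    rcases Sym2.mem_iff.mp hv with rfl | rfl
    · intro hve
      exact hNu ⟨e, Finset.mem_of_mem_erase he, hve⟩
    · intro hve
      exact hw ⟨e, Finset.mem_of_mem_erase he, hve⟩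

end Aux

section Aux2
variable [Fintype V] {G : SimpleGraph V}

lemma step_up {M : Finset (Sym2 V)} (hM : IsMaximalMatchingIn G M) (h : M.card < nuNum G) :
    ∃ M', IsMaximalMatchingIn G M' ∧ M'.card = M.card + 1 ∧ ∀ v, Sat M v → Sat M' v := by
  classical
  obtain ⟨X, hXm, hXcard⟩ := exists_nu_matching G
  obtain ⟨N, hNm, hNcard, hNsat⟩ := berge hM.1 hXm (hXcard ▸ h)
  refine ⟨N, ⟨hNm, ?_⟩, hNcard, hNsat⟩
  intro N' hN' hsub
  by_contra hne
  obtain ⟨e, heN', heN⟩ := Finset.exists_of_ssubset (lt_of_le_of_ne hsub (Ne.symm hne))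
  obtain ⟨a, b⟩ := e
  have hab : ∀ v, v ∈ s(a, b) → ¬ Sat M v := by
    intro v hv hsat
    obtain ⟨f, hfN, hvf⟩ := hNsat v hsat
    exact hN'.2 _ heN' f (hsub hfN) (fun hc => heN (hc ▸ hfN)) v hv hvf
  have heM : s(a, b) ∉ M := fun hc => hab a (Sym2.mem_mk_left a b) ⟨_, hc, Sym2.mem_mk_left a b⟩
  have hins : IsMatchingIn G (insert (s(a, b)) M) := by
    constructor
    · intro f hf
      rcases Finset.mem_insert.mp hf with rfl | hf'
      · exact hN'.1 _ heN'
      · exact hM.1.1 _ hf'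
    · intro f hf f' hf' hne' v hv
      rcases Finset.mem_insert.mp hf with rfl | hf2
      · rcases Finset.mem_insert.mp hf' with rfl | hf2'
        · exact absurd rfl hne'
        · exact fun hc => hab v hv ⟨_, hf2', hc⟩
      · rcases Finset.mem_insert.mp hf' with rfl | hf2'
        · exact fun hc => hab v hc ⟨_, hf2, hv⟩
        · exact hM.1.2 _ hf2 _ hf2' hne' v hv
  have := hM.2 _ hins (Finset.subset_insert _ _)
  exact heM (this ▸ Finset.mem_insert_self _ _)

lemma climb : ∀ (k : ℕ) (M : Finset (Sym2 V)), IsMaximalMatchingIn G M →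
    M.card + k + 1 = nuNum G →
    ∃ N, IsMaximalMatchingIn G N ∧ N.card + 1 = nuNum G ∧ ∀ v, Sat M v → Sat N v := by
  intro k
  induction k with
  | zero => exact fun M hM hc => ⟨M, hM, hc, fun v hv => hv⟩
  | succ k ih =>
    intro M hM hc
    obtain ⟨M', hM', hcard, hsat⟩ := step_up hM (by omega)
    obtain ⟨N, hN, hNcard, hNsat⟩ := ih M' hM' (by omega)
    exact ⟨N, hN, hNcard, fun v hv => hNsat v (hsat v hv)⟩

lemma equi_iff (G : SimpleGraph V) (S : Set V) :
    EquiSet G S ↔ ∀ M : Finset (Sym2 V), IsSecondBest G M → (S ∩ ExpSet M).Nonempty := by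
  constructor
  · intro h M ⟨hMmax, hMcard⟩
    by_contra hx
    have hcov : CoversSet M S := by
      intro v hv
      by_contra hsat
      exact hx ⟨v, hv, hsat⟩
    obtain ⟨M', hM', hcard, hsat⟩ := step_up hMmax (by omega)
    have hcov' : CoversSet M' S := fun v hv => hsat v (hcov v hv)
    have := h M M' hMmax hM' hcov hcov'
    omega
  · intro h M M' hM hM' hcov hcov'
    have key : ∀ N : Finset (Sym2 V), IsMaximalMatchingIn G N → CoversSet N S →
        N.card = nuNum G := by
      intro N hN hc
      have hle : N.card ≤ nuNum G := card_le_nu hN.1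
      rcases eq_or_lt_of_le hle with heq | hlt
      · exact heq
      · exfalso
        obtain ⟨N', hN', hN'card, hN'sat⟩ := climb (nuNum G - 1 - N.card) N hN (by omega)
        obtain ⟨v, hvS, hvexp⟩ := h N' ⟨hN', hN'card⟩
        exact hvexp (hN'sat v (hc v hvS))
    rw [key M hM hcov, key M' hM' hcov']

end Aux2

theorem stmt_13 {V : Type*} [Fintype V] (G : SimpleGraph V) :
    etaDefect G =
      sInf {n | ∃ S : Set V,
        (∀ M : Finset (Sym2 V), IsSecondBest G M → (S ∩ ExpSet M).Nonempty) ∧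
        S.ncard = n} := by
  unfold etaDefect
  congr 1
  ext n
  constructor
  · rintro ⟨S, h1, h2⟩
    exact ⟨S, (equi_iff G S).mp h1, h2⟩
  · rintro ⟨S, h1, h2⟩
    exact ⟨S, (equi_iff G S).mpr h1, h2⟩
end
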